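/- The number of degrees of freedom of the sparse grid space ⊕_{|l|₁ ≤ N} W_{l}^k, where dim W_{l}^k = (k+1)^d ∏_{m=1}^d max(1, 2^{l_m − 1}), satisfies the bound: it is at most C (k+1)^d 2^N N^{d-1} for a constant C depending only on d, i.e. it scales as O((k+1)^d 2^N N^{d-1}). -/

import Mathlib

/-- The number of degrees of freedom of the sparse grid space
`⊕_{|l|₁ ≤ N} W_l^k`, where `dim W_l^k = (k+1)^d ∏_m max(1, 2^{l_m-1})`,
is `O((k+1)^d 2^N N^{d-1})` with a constant depending only on `d`. -/
theorem stmt_6 (d : ℕ) (hd : 1 ≤ d) :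
    ∃ C : ℕ, 0 < C ∧ ∀ k N : ℕ, 1 ≤ N →
      (∑ l ∈ (Fintype.piFinset (fun _ : Fin d => Finset.range (N + 1))).filter
          (fun l => ∑ m, l m ≤ N),
        (k + 1) ^ d * ∏ m, max 1 (2 ^ (l m - 1)))
      ≤ C * ((k + 1) ^ d * 2 ^ N * N ^ (d - 1)) := by
  obtain ⟨d', rfl⟩ : ∃ d', d = d' + 1 := ⟨d - 1, (Nat.succ_pred_eq_of_pos hd).symm⟩
  refine ⟨2 ^ (d' + 1), Nat.pow_pos two_pos, fun k N hN => ?_⟩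
  set S := (Fintype.piFinset (fun _ : Fin (d' + 1) => Finset.range (N + 1))).filter
      (fun l => ∑ m, l m ≤ N) with hS
  have hterm : ∀ l ∈ S, (∏ m, max 1 (2 ^ (l m - 1))) ≤ 2 ^ (∑ m, l m) := by
    intro l _
    calc ∏ m, max 1 (2 ^ (l m - 1)) = ∏ m, 2 ^ (l m - 1) := by
          refine Finset.prod_congr rfl fun m _ => ?_
          exact max_eq_right Nat.one_le_two_pow
      _ = 2 ^ (∑ m, (l m - 1)) := Finset.prod_pow_eq_pow_sum _ _ _
      _ ≤ 2 ^ (∑ m, l m) := Nat.pow_le_pow_right (by norm_num)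
            (Finset.sum_le_sum fun m _ => Nat.sub_le _ _)
  have hcard : ∀ s : ℕ, (S.filter (fun l => ∑ m, l m = s)).card ≤ (N + 1) ^ d' := by
    intro s
    have hinj := Finset.card_le_card_of_injOn
      (f := fun (l : Fin (d' + 1) → ℕ) => (fun i : Fin d' => l i.castSucc))
      (s := S.filter (fun l => ∑ m, l m = s))
      (t := Fintype.piFinset (fun _ : Fin d' => Finset.range (N + 1)))
      (fun l hl => by
        have hl' : l ∈ Fintype.piFinset (fun _ : Fin (d' + 1) => Finset.range (N + 1)) :=
          Finset.mem_of_mem_filter _ (Finset.mem_of_mem_filter _ hl)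
        exact Fintype.mem_piFinset.mpr fun i => Fintype.mem_piFinset.mp hl' _)
      (fun l1 h1 l2 h2 heq => by
        have hs1 : ∑ m, l1 m = s := (Finset.mem_filter.mp h1).2
        have hs2 : ∑ m, l2 m = s := (Finset.mem_filter.mp h2).2
        have hcast : ∀ j : Fin d', l1 j.castSucc = l2 j.castSucc :=
          fun j => congrFun heq j
        funext i
        refine Fin.lastCases ?_ (fun j => hcast j) i
        have e1 := Fin.sum_univ_castSucc l1
        have e2 := Fin.sum_univ_castSucc l2
        have hsum : ∑ i : Fin d', l1 i.castSucc = ∑ i : Fin d', l2 i.castSucc :=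
          Finset.sum_congr rfl fun i _ => hcast i
        omega)
    calc (S.filter (fun l => ∑ m, l m = s)).card
        ≤ (Fintype.piFinset (fun _ : Fin d' => Finset.range (N + 1))).card := hinj
      _ = (N + 1) ^ d' := by simp
  have hgeo : ∀ n : ℕ, ∑ s ∈ Finset.range n, 2 ^ s < 2 ^ n := by
    intro n
    induction n with
    | zero => simp
    | succ n ih =>
      rw [Finset.sum_range_succ, pow_succ]
      omega
  have key : (∑ l ∈ S, (k + 1) ^ (d' + 1) * ∏ m, max 1 (2 ^ (l m - 1)))
      ≤ (k + 1) ^ (d' + 1) * ((N + 1) ^ d' * 2 ^ (N + 1)) := by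
    calc ∑ l ∈ S, (k + 1) ^ (d' + 1) * ∏ m, max 1 (2 ^ (l m - 1))
        ≤ ∑ l ∈ S, (k + 1) ^ (d' + 1) * 2 ^ (∑ m, l m) :=
          Finset.sum_le_sum fun l hl => Nat.mul_le_mul_left _ (hterm l hl)
      _ = (k + 1) ^ (d' + 1) * ∑ l ∈ S, 2 ^ (∑ m, l m) := (Finset.mul_sum _ _ _).symm
      _ = (k + 1) ^ (d' + 1) * ∑ s ∈ Finset.range (N + 1),
            ∑ l ∈ S.filter (fun l => ∑ m, l m = s), 2 ^ (∑ m, l m) := by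
          rw [Finset.sum_fiberwise_of_maps_to]
          intro l hl
          exact Finset.mem_range.mpr (Nat.lt_succ_of_le (Finset.mem_filter.mp hl).2)
      _ ≤ (k + 1) ^ (d' + 1) * ∑ s ∈ Finset.range (N + 1), (N + 1) ^ d' * 2 ^ s := by
          refine Nat.mul_le_mul_left _ (Finset.sum_le_sum fun s _ => ?_)
          calc ∑ l ∈ S.filter (fun l => ∑ m, l m = s), 2 ^ (∑ m, l m)
              = ∑ l ∈ S.filter (fun l => ∑ m, l m = s), 2 ^ s := by
                refine Finset.sum_congr rfl fun l hl => ?_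
                rw [(Finset.mem_filter.mp hl).2]
            _ = (S.filter (fun l => ∑ m, l m = s)).card * 2 ^ s := by
                rw [Finset.sum_const, smul_eq_mul]
            _ ≤ (N + 1) ^ d' * 2 ^ s := Nat.mul_le_mul_right _ (hcard s)
      _ = (k + 1) ^ (d' + 1) * ((N + 1) ^ d' * ∑ s ∈ Finset.range (N + 1), 2 ^ s) := by
          simp [Finset.mul_sum, mul_assoc]
      _ ≤ (k + 1) ^ (d' + 1) * ((N + 1) ^ d' * 2 ^ (N + 1)) := by
          exact Nat.mul_le_mul_left _ (Nat.mul_le_mul_left _ (le_of_lt (hgeo (N + 1))))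
  refine key.trans ?_
  have hN1 : (N + 1) ^ d' ≤ 2 ^ d' * N ^ d' := by
    calc (N + 1) ^ d' ≤ (2 * N) ^ d' := Nat.pow_le_pow_left (show N + 1 ≤ 2 * N from (Nat.two_mul N).symm ▸ Nat.add_le_add_left hN N) d'
      _ = 2 ^ d' * N ^ d' := mul_pow _ _ _
  calc (k + 1) ^ (d' + 1) * ((N + 1) ^ d' * 2 ^ (N + 1))
      ≤ (k + 1) ^ (d' + 1) * ((2 ^ d' * N ^ d') * 2 ^ (N + 1)) :=
        Nat.mul_le_mul_left _ (Nat.mul_le_mul_right _ hN1)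
    _ = 2 ^ (d' + 1) * ((k + 1) ^ (d' + 1) * 2 ^ N * N ^ (d' + 1 - 1)) := by
        simp only [Nat.add_sub_cancel]
        ring
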